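/- Let h : [0,1] → ℝ be defined by h(τ) = √(1+τ²)·(π + arcsin τ)/(π/2 − arctan(√(1−τ²)/√(1+τ²))) − τ. Then h has right-hand derivative 4/π − 1 at τ = 0; that is, h has derivative 4/π − 1 at 0 within the set [0,1], and in particular this one-sided derivative is positive. -/

import Mathlib

open Real Set

/-- The function `h(τ)` of the paper. -/
noncomputable def hFun (τ : ℝ) : ℝ :=
  Real.sqrt (1 + τ^2) * (π + Real.arcsin τ) /
    (π/2 - Real.arctan (Real.sqrt (1 - τ^2) / Real.sqrt (1 + τ^2))) - τ

theorem hFun_right_derivative_at_zero :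
    HasDerivWithinAt hFun (4 / π - 1) (Set.Icc (0:ℝ) 1) 0 ∧ 0 < 4 / π - 1 := by
  have hpi : (0:ℝ) < π := Real.pi_pos
  constructor
  · -- derivative of 1 + τ^2 at 0 is 0
    have hplus : HasDerivAt (fun τ : ℝ => 1 + τ^2) 0 0 := by
      simpa using (hasDerivAt_pow 2 (0:ℝ)).const_add 1
    have hminus : HasDerivAt (fun τ : ℝ => 1 - τ^2) 0 0 := by
      simpa using (hasDerivAt_pow 2 (0:ℝ)).const_sub 1
    have hsq1 : Real.sqrt (1 + (0:ℝ)^2) = 1 := by norm_num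
    have hsq2 : Real.sqrt (1 - (0:ℝ)^2) = 1 := by norm_num
    have hs1 : HasDerivAt (fun τ : ℝ => Real.sqrt (1 + τ^2)) 0 0 := by
      have := (Real.hasDerivAt_sqrt (by norm_num : (1:ℝ) + 0^2 ≠ 0)).comp 0 hplus
      simpa [Function.comp_def, Pi.mul_def, Pi.div_def] using this
    have hs2 : HasDerivAt (fun τ : ℝ => Real.sqrt (1 - τ^2)) 0 0 := by
      have := (Real.hasDerivAt_sqrt (by norm_num : (1:ℝ) - 0^2 ≠ 0)).comp 0 hminus
      simpa [Function.comp_def, Pi.mul_def, Pi.div_def] using this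
    have harcsin : HasDerivAt Real.arcsin 1 0 := by
      have := Real.hasDerivAt_arcsin (by norm_num : (0:ℝ) ≠ -1) (by norm_num : (0:ℝ) ≠ 1)
      simpa [Function.comp_def, Pi.mul_def, Pi.div_def] using this
    -- numerator
    have hnum : HasDerivAt (fun τ : ℝ => Real.sqrt (1 + τ^2) * (π + Real.arcsin τ)) 1 0 := by
      have := hs1.mul (harcsin.const_add π)
      simpa [hsq1, Pi.mul_def] using this
    -- quotient inside arctan
    have hu : HasDerivAt (fun τ : ℝ => Real.sqrt (1 - τ^2) / Real.sqrt (1 + τ^2)) 0 0 := by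
      have := hs2.div hs1 (by norm_num)
      simpa [Function.comp_def, Pi.mul_def, Pi.div_def] using this
    have huval : Real.sqrt (1 - (0:ℝ)^2) / Real.sqrt (1 + (0:ℝ)^2) = 1 := by norm_num
    have hatan : HasDerivAt (fun τ : ℝ =>
        Real.arctan (Real.sqrt (1 - τ^2) / Real.sqrt (1 + τ^2))) 0 0 := by
      have h0 := (Real.hasDerivAt_arctan ((fun τ : ℝ =>
        Real.sqrt (1 - τ^2) / Real.sqrt (1 + τ^2)) 0)).comp 0 hu
      simpa [Function.comp_def] using h0
    have hden : HasDerivAt (fun τ : ℝ =>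
        π/2 - Real.arctan (Real.sqrt (1 - τ^2) / Real.sqrt (1 + τ^2))) 0 0 := by
      simpa using hatan.const_sub (π/2)
    have hdenval : π/2 - Real.arctan (Real.sqrt (1 - (0:ℝ)^2) / Real.sqrt (1 + (0:ℝ)^2))
        = π/4 := by
      rw [huval, Real.arctan_one]; ring
    have hdiv : HasDerivAt (fun τ : ℝ => Real.sqrt (1 + τ^2) * (π + Real.arcsin τ) /
        (π/2 - Real.arctan (Real.sqrt (1 - τ^2) / Real.sqrt (1 + τ^2)))) (4/π) 0 := by
      have h0 := hnum.div hden (by rw [hdenval]; positivity)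
      have : (1 * (π/2 - Real.arctan (Real.sqrt (1 - (0:ℝ)^2) / Real.sqrt (1 + (0:ℝ)^2)))
          - Real.sqrt (1 + (0:ℝ)^2) * (π + Real.arcsin 0) * 0) /
          (π/2 - Real.arctan (Real.sqrt (1 - (0:ℝ)^2) / Real.sqrt (1 + (0:ℝ)^2)))^2 = 4/π := by
        rw [hdenval]
        field_simp
        ring
      rw [← this]
      exact h0
    have : HasDerivAt hFun (4/π - 1) 0 := by
      unfold hFun; simpa [Pi.sub_def] using hdiv.sub (hasDerivAt_id 0)
    exact this.hasDerivWithinAt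
  · have h4 : π < 4 := Real.pi_lt_d2.trans (by norm_num)
    have : 1 < 4 / π := (one_lt_div hpi).mpr h4
    linarith
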